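/- Let n ≥ 1, F : ℝ^n → ℝ^n, x ∈ ℝ^n, τ > 0 and ε ≥ 0. Let g : ℝ^n → ℝ^n satisfy ‖g(y) - (F(y) - y)/(2τ)‖ ≤ ε for all y ∈ ℝ^n. Let z : ℝ → ℝ^n be continuous on [0, 2τ] with z(t) = x for all t ∈ [-τ, 0], and suppose that for every t ∈ [0, 2τ), z has right derivative g(z(τ·⌊(t - τ)/τ⌋)) at t (derivative within [t, ∞)). Then ‖z(2τ) - F(x)‖ ≤ 2τ·ε. In particular, if g(y) = (F(y) - y)/(2τ) exactly, then z(2τ) = F(x). -/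

import Mathlib

theorem npcdde_universal_approximation
    (n : ℕ) (hn : 1 ≤ n)
    (F : EuclideanSpace ℝ (Fin n) → EuclideanSpace ℝ (Fin n))
    (x : EuclideanSpace ℝ (Fin n)) (τ : ℝ) (hτ : 0 < τ) (ε : ℝ) (hε : 0 ≤ ε)
    (g : EuclideanSpace ℝ (Fin n) → EuclideanSpace ℝ (Fin n))
    (hg : ∀ y, ‖g y - (2 * τ)⁻¹ • (F y - y)‖ ≤ ε)
    (z : ℝ → EuclideanSpace ℝ (Fin n))
    (hzc : ContinuousOn z (Set.Icc 0 (2 * τ)))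
    (hz0 : ∀ t ∈ Set.Icc (-τ) 0, z t = x)
    (hz' : ∀ t ∈ Set.Ico 0 (2 * τ),
      HasDerivWithinAt z (g (z (τ * ↑⌊(t - τ) / τ⌋))) (Set.Ici t) t) :
    ‖z (2 * τ) - F x‖ ≤ 2 * τ * ε ∧
      ((∀ y, g y = (2 * τ)⁻¹ • (F y - y)) → z (2 * τ) = F x) := by
  -- Step 1: the delayed argument always lands in [-τ, 0], where z = x.
  have hdel : ∀ t ∈ Set.Ico (0 : ℝ) (2 * τ), z (τ * ↑⌊(t - τ) / τ⌋) = x := by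
    intro t ht
    obtain ⟨ht0, ht2⟩ := ht
    have h1 : (-1 : ℤ) ≤ ⌊(t - τ) / τ⌋ := by
      apply Int.le_floor.2
      push_cast
      rw [le_div_iff₀ hτ]
      linarith
    have h2 : ⌊(t - τ) / τ⌋ ≤ 0 := by
      have : ⌊(t - τ) / τ⌋ < 1 := by
        rw [Int.floor_lt]; push_cast; rw [div_lt_one hτ]; linarith
      omega
    apply hz0
    constructor
    · have : (-1 : ℝ) ≤ (⌊(t - τ) / τ⌋ : ℝ) := by exact_mod_cast h1
      nlinarith
    · have : ((⌊(t - τ) / τ⌋ : ℤ) : ℝ) ≤ 0 := by exact_mod_cast h2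
      nlinarith
  have hz'' : ∀ t ∈ Set.Ico (0 : ℝ) (2 * τ),
      HasDerivWithinAt z (g x) (Set.Ici t) t := by
    intro t ht
    have := hz' t ht
    rwa [hdel t ht] at this
  -- Step 2: w t = z t - t • g x is constant on [0, 2τ].
  set w : ℝ → EuclideanSpace ℝ (Fin n) := fun t => z t - t • g x with hw
  have hwc : ContinuousOn w (Set.Icc 0 (2 * τ)) :=
    hzc.sub ((continuous_id.smul continuous_const).continuousOn)
  have hw' : ∀ t ∈ Set.Ico (0 : ℝ) (2 * τ),
      HasDerivWithinAt w 0 (Set.Ici t) t := by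
    intro t ht
    have h1 := (hz'' t ht).sub ((hasDerivWithinAt_id t _).smul_const (g x))
    rw [one_smul, sub_self] at h1
    exact h1
  have hconst := constant_of_has_deriv_right_zero hwc hw' (2 * τ)
    (Set.right_mem_Icc.2 (by positivity))
  have hz0' : z 0 = x := hz0 0 ⟨by linarith, le_refl 0⟩
  have hkey : z (2 * τ) = x + (2 * τ) • g x := by
    have : z (2 * τ) - (2 * τ) • g x = z 0 - (0 : ℝ) • g x := hconst
    rw [hz0'] at this
    simp at this
    exact sub_eq_iff_eq_add.mp this
  have h2τ : (2 * τ) ≠ 0 := by positivity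
  constructor
  · have : z (2 * τ) - F x = (2 * τ) • (g x - (2 * τ)⁻¹ • (F x - x)) := by
      rw [hkey, smul_sub, smul_inv_smul₀ h2τ]
      abel
    rw [this, norm_smul]
    have h := hg x
    have hpos : (0 : ℝ) < 2 * τ := by positivity
    rw [Real.norm_eq_abs, abs_of_pos hpos]
    exact mul_le_mul_of_nonneg_left h hpos.le
  · intro hgeq
    rw [hkey, hgeq x, smul_inv_smul₀ h2τ]
    abel
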